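/- arXiv:2502.13653 — 3 statements merged into one kernel-verified Lean document; each statement's English description precedes it below -/
import Mathlib

section
/- Let T be a spanning tree of a finite point set P in a range space (X, R). Then there exists a Hamiltonian path Π on P such that for every range q ∈ R, the number of edges of Π stabbed by q is at most twice the number of edges of T stabbed by q. -/
open scoped Classical

/-- An edge (unordered pair) is stabbed by a range `q` if exactly one of its
endpoints lies in `q`. -/
def EdgeStabbed {V : Type*} (q : Set V) (e : Sym2 V) : Prop :=
  ∃ a b, e = s(a, b) ∧ a ∈ q ∧ b ∉ q

/-- The stabbing number `σ(G, q)`: the number of edges of the graph `G`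
having exactly one endpoint in the range `q`. -/
noncomputable def graphStab {V : Type*} [Fintype V] (G : SimpleGraph V) (q : Set V) : ℕ :=
  (Finset.univ.filter fun e : Sym2 V => e ∈ G.edgeSet ∧ EdgeStabbed q e).card

/-- The stabbing number of a path given as a list of vertices: the number of
consecutive pairs with exactly one element in `q`. -/
noncomputable def pathStab {V : Type*} (p : List V) (q : Set V) : ℕ :=
  (p.zip p.tail).countP fun ab =>
    decide ((ab.1 ∈ q ∧ ab.2 ∉ q) ∨ (ab.1 ∉ q ∧ ab.2 ∈ q))

noncomputable def ind {V : Type*} (q : Set V) (a b : V) : ℕ :=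
  if (a ∈ q ∧ b ∉ q) ∨ (a ∉ q ∧ b ∈ q) then 1 else 0

lemma pathStab_nil {V : Type*} (q : Set V) : pathStab [] q = 0 := rfl

lemma pathStab_single {V : Type*} (q : Set V) (a : V) : pathStab [a] q = 0 := rfl

lemma pathStab_cons_cons {V : Type*} (q : Set V) (a b : V) (l : List V) :
    pathStab (a :: b :: l) q = ind q a b + pathStab (b :: l) q := by
  unfold pathStab ind
  simp only [List.tail_cons, List.zip_cons_cons, List.countP_cons]
  by_cases h : (a ∈ q ∧ b ∉ q) ∨ (a ∉ q ∧ b ∈ q) <;> simp [h, Nat.add_comm]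

lemma ind_triangle {V : Type*} (q : Set V) (x v b : V) :
    ind q v b ≤ ind q x b + ind q x v := by
  unfold ind
  by_cases hx : x ∈ q <;> by_cases hv : v ∈ q <;> by_cases hb : b ∈ q <;>
    simp [hx, hv, hb]

lemma pathStab_map {V W : Type*} (f : V → W) (q : Set W) :
    ∀ l : List V, pathStab (l.map f) q = pathStab l (f ⁻¹' q)
  | [] => rfl
  | [a] => rfl
  | a :: b :: l => by
    have := pathStab_map f q (b :: l)
    simp only [List.map_cons] at *
    rw [pathStab_cons_cons, pathStab_cons_cons, this]
    rfl

lemma pathStab_insert_le {V : Type*} (q : Set V) (x v : V) (B : List V) :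
    ∀ A : List V,
      pathStab (A ++ x :: v :: B) q ≤ pathStab (A ++ x :: B) q + 2 * ind q x v
  | [] => by
    simp only [List.nil_append]
    rw [pathStab_cons_cons]
    rcases B with _ | ⟨b, B⟩
    · simp [pathStab_single]; omega
    · rw [pathStab_cons_cons, pathStab_cons_cons]
      have := ind_triangle q x v b
      have hsym : ind q x v = ind q v x := by unfold ind; by_cases h1 : x ∈ q <;> by_cases h2 : v ∈ q <;> simp [h1, h2]
      omega
  | a :: A => by
    rcases A with _ | ⟨a', A⟩
    · have := pathStab_insert_le q x v B []
      simp only [List.nil_append] at this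
      simp only [List.cons_append, List.nil_append, pathStab_cons_cons] at this ⊢
      omega
    · have := pathStab_insert_le q x v B (a' :: A)
      simp only [List.cons_append, pathStab_cons_cons] at this ⊢
      omega

lemma edgeStabbed_mk {V : Type*} (q : Set V) (u v : V) :
    EdgeStabbed q s(u, v) ↔ (u ∈ q ∧ v ∉ q) ∨ (v ∈ q ∧ u ∉ q) := by
  constructor
  · rintro ⟨a, b, he, ha, hb⟩
    rw [Sym2.eq_iff] at he
    rcases he with ⟨rfl, rfl⟩ | ⟨rfl, rfl⟩
    · exact Or.inl ⟨ha, hb⟩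
    · exact Or.inr ⟨ha, hb⟩
  · rintro (⟨h1, h2⟩ | ⟨h1, h2⟩)
    · exact ⟨u, v, rfl, h1, h2⟩
    · exact ⟨v, u, Sym2.eq_swap, h1, h2⟩

lemma exists_leaf {V : Type*} [Fintype V] (T : SimpleGraph V) (hT : T.IsTree)
    (h2 : 2 ≤ Fintype.card V) : ∃ v, T.degree v = 1 := by
  classical
  have hdeg : ∀ v : V, 1 ≤ T.degree v := by
    intro v
    obtain ⟨w, hw⟩ : ∃ w : V, w ≠ v := Fintype.exists_ne_of_one_lt_card h2 v
    have hr : T.Reachable v w := hT.isConnected.preconnected v w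
    rw [Nat.one_le_iff_ne_zero, ← Nat.pos_iff_ne_zero, T.degree_pos_iff_exists_adj]
    obtain ⟨p⟩ := hr
    cases p with
    | nil => exact absurd rfl hw
    | cons h _ => exact ⟨_, h⟩
  have hsum : ∑ v : V, T.degree v = 2 * T.edgeFinset.card :=
    T.sum_degrees_eq_twice_card_edges
  have hcard : T.edgeFinset.card + 1 = Fintype.card V := hT.card_edgeFinset
  by_contra hno
  push_neg at hno
  have hdeg2 : ∀ v : V, 2 ≤ T.degree v := by
    intro v
    have := hdeg v
    have := hno v
    omega
  have : 2 * Fintype.card V ≤ ∑ v : V, T.degree v := by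
    calc 2 * Fintype.card V = ∑ _v : V, 2 := by
          simp [Finset.sum_const, Finset.card_univ, Nat.mul_comm]
      _ ≤ ∑ v : V, T.degree v := Finset.sum_le_sum fun v _ => hdeg2 v
  omega

lemma reachable_induce_of_support {V : Type*} {G : SimpleGraph V} {s : Set V} :
    ∀ {a b : V} (w : G.Walk a b), (∀ x ∈ w.support, x ∈ s) →
      ∀ (ha : a ∈ s) (hb : b ∈ s), (G.induce s).Reachable ⟨a, ha⟩ ⟨b, hb⟩ := by
  intro a b w
  induction w with
  | nil => intro _ ha hb; rfl
  | @cons a c b h q ih =>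
    intro hsup ha hb
    have hc : c ∈ s := hsup c (by simp)
    have step : (G.induce s).Adj ⟨a, ha⟩ ⟨c, hc⟩ := by
      simp [SimpleGraph.comap_adj, h]
    exact (step.reachable).trans (ih (fun x hx => hsup x (by simp [hx])) hc hb)

lemma tree_minus_leaf {V : Type*} (T : SimpleGraph V) (hT : T.IsTree)
    (v u : V) (hadj : T.Adj v u) (hleaf : ∀ w, T.Adj v w → w = u) :
    (T.induce {x | x ≠ v}).IsTree := by
  classical
  set s : Set V := {x | x ≠ v} with hs
  constructor
  · -- connected
    rw [SimpleGraph.connected_iff]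
    refine ⟨?_, ⟨⟨u, hadj.ne'⟩⟩⟩
    rintro ⟨a, ha⟩ ⟨b, hb⟩
    obtain ⟨p, hp, -⟩ := hT.existsUnique_path a b
    have hvp : v ∉ p.support := by
      intro hv
      have hva : v ≠ a := fun h => ha (h ▸ rfl)
      have hvb : v ≠ b := fun h => hb (h ▸ rfl)
      have hsplit := p.take_spec hv
      set p1 := p.takeUntil v hv with hp1
      set p2 := p.dropUntil v hv with hp2
      -- u is in the support of p1 (just before v) and in p2.support.tail
      obtain ⟨y, hy, q2, hq2⟩ := p2.exists_eq_cons_of_ne hvb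
      have hyu : y = u := hleaf y hy
      subst hyu
      have hu2 : y ∈ p2.support.tail := by
        rw [hq2]
        simpa using q2.start_mem_support
      have hu1 : y ∈ p1.support := by
        obtain ⟨y', hy', q1, hq1⟩ := p1.reverse.exists_eq_cons_of_ne hva
        have hyu' : y' = y := hleaf y' hy'
        subst hyu'
        have : y' ∈ p1.reverse.support := by
          rw [hq1]
          simpa using q1.start_mem_support
        rwa [SimpleGraph.Walk.support_reverse, List.mem_reverse] at this
      have hnd := hp.support_nodup
      rw [← hsplit, SimpleGraph.Walk.support_append] at hnd
      exact (List.disjoint_of_nodup_append hnd) hu1 hu2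
    exact reachable_induce_of_support p
      (by intro x hx hxv; subst hxv; exact hvp hx) ha hb
  · -- acyclic
    intro w c hc
    have := hc.map (f := (SimpleGraph.Embedding.induce s).toHom)
      (Subtype.val_injective)
    exact hT.IsAcyclic _ this

lemma graphStab_le_of_adj {V : Type*} [Fintype V] (T : SimpleGraph V) (u v : V)
    (hadj : T.Adj u v) (q : Set V) :
    graphStab (T.induce {x | x ≠ v}) (Subtype.val ⁻¹' q) + ind q u v ≤ graphStab T q := by
  classical
  set s : Set V := {x | x ≠ v} with hs
  set T' := T.induce s with hT'
  set q' : Set s := Subtype.val ⁻¹' q with hq'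
  set S : Finset (Sym2 V) :=
    Finset.univ.filter (fun e : Sym2 V => e ∈ T.edgeSet ∧ EdgeStabbed q e) with hS
  set S' : Finset (Sym2 s) :=
    Finset.univ.filter (fun e : Sym2 s => e ∈ T'.edgeSet ∧ EdgeStabbed q' e) with hS'
  have hφinj : Function.Injective (Sym2.map (Subtype.val : s → V)) :=
    Sym2.map.injective Subtype.val_injective
  have hmapmem : ∀ e' ∈ S', Sym2.map Subtype.val e' ∈ S ∧ v ∉ Sym2.map Subtype.val e' := by
    intro e' he'
    rw [hS', Finset.mem_filter] at he'
    obtain ⟨-, hedge, hstab⟩ := he'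
    induction e' using Sym2.ind with
    | _ a b =>
      rw [Sym2.map_pair_eq]
      refine ⟨?_, ?_⟩
      · rw [hS, Finset.mem_filter]
        refine ⟨Finset.mem_univ _, ?_, ?_⟩
        · rw [SimpleGraph.mem_edgeSet] at hedge ⊢
          exact hedge
        · rw [edgeStabbed_mk] at hstab ⊢
          exact hstab
      · intro hv
        rw [Sym2.mem_iff] at hv
        rcases hv with h | h
        · exact a.prop h.symm
        · exact b.prop h.symm
  rw [show graphStab T' q' = S'.card from rfl, show graphStab T q = S.card from rfl]
  by_cases hind : (u ∈ q ∧ v ∉ q) ∨ (u ∉ q ∧ v ∈ q)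
  · have hind1 : ind q u v = 1 := by rw [ind, if_pos hind]
    have huv : s(u, v) ∈ S := by
      rw [hS, Finset.mem_filter]
      refine ⟨Finset.mem_univ _, hadj, ?_⟩
      rw [edgeStabbed_mk]
      tauto
    have hsub : ∀ e' ∈ S', Sym2.map Subtype.val e' ∈ S.erase s(u, v) := by
      intro e' he'
      obtain ⟨hmem, hv⟩ := hmapmem e' he'
      rw [Finset.mem_erase]
      exact ⟨fun h => hv (h ▸ Sym2.mem_mk_right u v), hmem⟩
    have hcard : S'.card ≤ (S.erase s(u, v)).card :=
      Finset.card_le_card_of_injOn _ hsub (Function.Injective.injOn hφinj)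
    have := Finset.card_erase_add_one huv
    omega
  · have hind0 : ind q u v = 0 := by rw [ind, if_neg hind]
    have hcard : S'.card ≤ S.card :=
      Finset.card_le_card_of_injOn _ (fun e' he' => (hmapmem e' he').1)
        (Function.Injective.injOn hφinj)
    omega

lemma main_lemma : ∀ (n : ℕ) (V : Type u) (_ : Fintype V) (T : SimpleGraph V),
    Fintype.card V = n → T.IsTree →
    ∃ p : List V, p.Nodup ∧ (∀ v : V, v ∈ p) ∧
      ∀ q : Set V, pathStab p q ≤ 2 * graphStab T q := by
  intro n
  induction n using Nat.strong_induction_on with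
  | _ n ih =>
    intro V hfV T hcard hT
    rcases Nat.lt_or_ge n 2 with hn | hn
    · -- card ≤ 1 ; tree so nonempty, card = 1
      have h1 : Fintype.card V = 1 := by
        have : 0 < Fintype.card V := by
          have : Nonempty V := hT.isConnected.nonempty
          exact Fintype.card_pos
        omega
      obtain ⟨x, hx⟩ := Fintype.card_eq_one_iff.mp h1
      refine ⟨[x], List.nodup_singleton x, fun v => by simp [hx v], fun q => ?_⟩
      simp [pathStab_single]
    · -- find a leaf
      obtain ⟨v, hv⟩ := exists_leaf T hT (hcard ▸ hn)
      obtain ⟨u, hu⟩ := Finset.card_eq_one.mp (by rw [← hv]; rfl :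
        (T.neighborFinset v).card = 1)
      have hadj : T.Adj v u := by
        rw [← SimpleGraph.mem_neighborFinset, hu]; exact Finset.mem_singleton_self u
      have hleaf : ∀ w, T.Adj v w → w = u := by
        intro w hw
        have : w ∈ T.neighborFinset v := by rwa [SimpleGraph.mem_neighborFinset]
        rwa [hu, Finset.mem_singleton] at this
      have hT' : (T.induce {x : V | x ≠ v}).IsTree := tree_minus_leaf T hT v u hadj hleaf
      have hcard' : Fintype.card {x : V | x ≠ v} = n - 1 := by
        have h0 : Fintype.card {x : V | x ≠ v} = Fintype.card V - 1 :=
          Set.card_ne_eq v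
        omega
      obtain ⟨p', hnd', hmem', hbound'⟩ :=
        ih (n - 1) (by omega) {x : V | x ≠ v} (inferInstance)
          (T.induce {x : V | x ≠ v}) hcard' hT'
      set L : List V := p'.map Subtype.val with hL
      have hLnd : L.Nodup := hnd'.map Subtype.val_injective
      have hvL : v ∉ L := by
        rw [hL]
        intro h
        obtain ⟨⟨x, hx⟩, -, h2⟩ := List.mem_map.mp h
        exact hx h2
      have huL : u ∈ L := by
        rw [hL]
        exact List.mem_map.mpr ⟨⟨u, hadj.ne'⟩, hmem' _, rfl⟩
      obtain ⟨l1, l2, hsplit⟩ := List.append_of_mem huL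
      refine ⟨l1 ++ u :: v :: l2, ?_, ?_, ?_⟩
      · have hperm : (l1 ++ u :: v :: l2).Perm (v :: L) := by
          rw [hsplit]
          have h1 := List.perm_middle (a := v) (l₁ := l1 ++ [u]) (l₂ := l2)
          simpa [List.append_assoc] using h1
        exact hperm.nodup_iff.mpr (List.nodup_cons.mpr ⟨hsplit ▸ hvL, hsplit ▸ hLnd⟩)
      · intro w
        by_cases hw : w = v
        · subst hw; simp
        · have : w ∈ L := hL ▸ List.mem_map.mpr ⟨⟨w, hw⟩, hmem' _, rfl⟩
          rw [hsplit] at this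
          simp at this ⊢
          tauto
      · intro q
        have h1 : pathStab (l1 ++ u :: v :: l2) q ≤
            pathStab (l1 ++ u :: l2) q + 2 * ind q u v :=
          pathStab_insert_le q u v l2 l1
        have h2 : pathStab (l1 ++ u :: l2) q = pathStab p' (Subtype.val ⁻¹' q) := by
          rw [← hsplit, hL, pathStab_map]
        have h3 := hbound' (Subtype.val ⁻¹' q)
        have h4 := graphStab_le_of_adj T u v hadj.symm q
        omega

/-- for every spanning tree `T` of a finite point set there is a
Hamiltonian path `Π` (a duplicate-free list of all the points) such that for
every range `q ∈ R`, `σ(Π, q) ≤ 2·σ(T, q)`. -/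
theorem stmt3 {V : Type*} [Fintype V] (R : Set (Set V))
    (T : SimpleGraph V) (hT : T.IsTree) :
    ∃ p : List V, p.Nodup ∧ (∀ v : V, v ∈ p) ∧
      ∀ q ∈ R, pathStab p q ≤ 2 * graphStab T q := by
  obtain ⟨p, h1, h2, h3⟩ := main_lemma (Fintype.card V) V inferInstance T rfl hT
  exact ⟨p, h1, h2, fun q _ => h3 q⟩
end

section
/- Let T be a partition tree on a finite point set P in a range space (X, R) whose leaves each contain a single point. Then there exists a Hamiltonian path Π on P such that for every range q ∈ R, σ(Π, q) ≤ ζ(T, q). -/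
open scoped Classical

/-- A partition tree: each node carries the subset of points associated with it
and a (possibly empty) family of children. -/
inductive PTree (V : Type u) : Type u
  | node : Finset V → (k : ℕ) → (Fin k → PTree V) → PTree V

namespace PTree

/-- The point set associated with the root of a partition tree. -/
def pts {V : Type u} : PTree V → Finset V
  | .node s _ _ => s

/-- A range `q` stabs a set `s` if `q ∩ s ≠ ∅` and `q ∩ s ≠ s`. -/
def Stabs {V : Type u} (q : Set V) (s : Set V) : Prop :=
  (q ∩ s).Nonempty ∧ ¬ s ⊆ q

/-- Validity of a partition tree: the children of each internal node are
pairwise disjoint and their point sets partition the node's point set. -/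
def valid {V : Type u} [DecidableEq V] : PTree V → Prop
  | .node s k c =>
      (k ≠ 0 → s = Finset.univ.biUnion fun i : Fin k => (c i).pts) ∧
      (∀ i j : Fin k, i ≠ j → Disjoint (c i).pts (c j).pts) ∧
      ∀ i : Fin k, (c i).valid

/-- A binary partition tree: every node has at most two children. -/
def binary {V : Type u} : PTree V → Prop
  | .node _ k c => k ≤ 2 ∧ ∀ i : Fin k, (c i).binary

/-- Number of non-root nodes whose parent's point set is stabbed by `q`. -/
noncomputable def zetaAux {V : Type u} (q : Set V) : PTree V → ℕ
  | .node s k c =>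
      (if Stabs q (↑s : Set V) then k else 0) + ∑ i : Fin k, (c i).zetaAux q

/-- The visiting number `ζ(T, q)`: the number of nodes that are either the root
or whose parent's point set is stabbed by `q`. -/
noncomputable def zeta {V : Type u} (q : Set V) (T : PTree V) : ℕ :=
  1 + T.zetaAux q

end PTree

/-- Predicate: every leaf of the partition tree holds exactly one point. -/
def PTree.leavesSingle {V : Type u} : PTree V → Prop
  | .node s k c => (k = 0 → s.card = 1) ∧ ∀ i : Fin k, (c i).leavesSingle


namespace PTreeAux

open PTree

variable {V : Type*}

/-- Flatten a partition tree into a list: leaves contribute their point sets,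
internal nodes concatenate their children's lists. -/
noncomputable def flatten : PTree V → List V
  | .node s 0 _ => s.toList
  | .node _ (k+1) c => (List.ofFn fun i : Fin (k+1) => flatten (c i)).flatten
termination_by structural T => T

lemma flatten_zero (s : Finset V) (c : Fin 0 → PTree V) :
    flatten (.node s 0 c) = s.toList := by
  rw [flatten]

lemma flatten_succ (s : Finset V) (k : ℕ) (c : Fin (k+1) → PTree V) :
    flatten (.node s (k+1) c) = (List.ofFn fun i : Fin (k+1) => flatten (c i)).flatten := by
  rw [flatten]

lemma pathStab_nil (q : Set V) : pathStab ([] : List V) q = 0 := rfl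

lemma pathStab_singleton (a : V) (q : Set V) : pathStab [a] q = 0 := rfl

lemma pathStab_cons_cons (a b : V) (l : List V) (q : Set V) :
    pathStab (a :: b :: l) q =
      (if (a ∈ q ∧ b ∉ q) ∨ (a ∉ q ∧ b ∈ q) then 1 else 0) + pathStab (b :: l) q := by
  simp only [pathStab, List.tail_cons, List.zip_cons_cons, List.countP_cons]
  by_cases h : (a ∈ q ∧ b ∉ q) ∨ (a ∉ q ∧ b ∈ q) <;> simp [h, Nat.add_comm]

lemma pathStab_append (l1 l2 : List V) (q : Set V) :
    pathStab (l1 ++ l2) q ≤ pathStab l1 q + pathStab l2 q + 1 := by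
  induction l1 with
  | nil => simp only [List.nil_append, pathStab_nil]; omega
  | cons a t ih =>
    cases t with
    | nil =>
      cases l2 with
      | nil => simp [pathStab_singleton]
      | cons b t2 =>
        rw [List.singleton_append, pathStab_cons_cons, pathStab_singleton]
        split <;> omega
    | cons b t' =>
      rw [List.cons_append, List.cons_append, pathStab_cons_cons,
        ← List.cons_append, pathStab_cons_cons]
      have := ih
      rw [List.cons_append] at this
      split <;> omega

lemma pathStab_join (L : List (List V)) (q : Set V) :
    pathStab L.flatten q ≤ (L.map (pathStab · q)).sum + L.length := by
  induction L with
  | nil => simp [pathStab_nil]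
  | cons l L ih =>
    calc pathStab (l ++ L.flatten) q ≤ pathStab l q + pathStab L.flatten q + 1 :=
          pathStab_append _ _ _
      _ ≤ pathStab l q + ((L.map (pathStab · q)).sum + L.length) + 1 := by omega
      _ = ((l :: L).map (pathStab · q)).sum + (l :: L).length := by
          simp; omega

lemma pathStab_eq_zero_of_mem (l : List V) (q : Set V) (h : ∀ x ∈ l, x ∈ q) :
    pathStab l q = 0 := by
  unfold pathStab
  rw [List.countP_eq_zero]
  intro ab hab
  obtain ⟨h1, h2⟩ := List.of_mem_zip hab
  have h1' := h ab.1 h1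
  have h2' := h ab.2 (List.mem_of_mem_tail h2)
  simp [h1', h2']

lemma pathStab_eq_zero_of_not_mem (l : List V) (q : Set V) (h : ∀ x ∈ l, x ∉ q) :
    pathStab l q = 0 := by
  unfold pathStab
  rw [List.countP_eq_zero]
  intro ab hab
  obtain ⟨h1, h2⟩ := List.of_mem_zip hab
  have h1' := h ab.1 h1
  have h2' := h ab.2 (List.mem_of_mem_tail h2)
  simp [h1', h2']

lemma mem_flatten [DecidableEq V] (T : PTree V) (hv : T.valid) (x : V) :
    x ∈ flatten T ↔ x ∈ T.pts := by
  induction T with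
  | node s k c ih =>
    cases k with
    | zero => simp [flatten_zero, pts]
    | succ k =>
      obtain ⟨hk, _, hvc⟩ := hv
      simp only [flatten_succ, List.mem_flatten, List.mem_ofFn, pts]
      rw [hk (Nat.succ_ne_zero k), Finset.mem_biUnion]
      constructor
      · rintro ⟨l, ⟨i, rfl⟩, hx⟩
        exact ⟨i, Finset.mem_univ i, (ih i (hvc i)).mp hx⟩
      · rintro ⟨i, -, hx⟩
        exact ⟨flatten (c i), ⟨i, rfl⟩, (ih i (hvc i)).mpr hx⟩

lemma nodup_flatten [DecidableEq V] (T : PTree V) (hv : T.valid) :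
    (flatten T).Nodup := by
  induction T with
  | node s k c ih =>
    cases k with
    | zero => rw [flatten_zero]; exact Finset.nodup_toList s
    | succ k =>
      obtain ⟨hk, hdisj, hvc⟩ := hv
      rw [flatten_succ, List.nodup_flatten]
      constructor
      · intro l hl'
        obtain ⟨i, rfl⟩ := List.mem_ofFn.mp hl'
        exact ih i (hvc i)
      · rw [List.pairwise_ofFn]
        intro i j hij
        intro x hxi hxj
        have hx1 : x ∈ (c i).pts := (mem_flatten _ (hvc i) x).mp hxi
        have hx2 : x ∈ (c j).pts := (mem_flatten _ (hvc j) x).mp hxj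
        simpa using (hdisj i j (Fin.ne_of_lt hij)).le_bot (Finset.mem_inter.mpr ⟨hx1, hx2⟩)

lemma pathStab_flatten_le [DecidableEq V] (T : PTree V) (hv : T.valid)
    (hl : T.leavesSingle) (q : Set V) :
    pathStab (flatten T) q ≤ if Stabs q (↑T.pts : Set V) then T.zetaAux q else 0 := by
  induction T with
  | node s k c ih =>
    by_cases hst : Stabs q (↑s : Set V)
    · -- stabbed case
      cases k with
      | zero =>
        -- leaf: singleton can't be stabbed
        obtain ⟨hcard, -⟩ := hl
        obtain ⟨a, rfl⟩ := Finset.card_eq_one.mp (hcard rfl)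
        obtain ⟨hne, hsub⟩ := hst
        obtain ⟨x, hxq, hxs⟩ := hne
        simp only [Finset.coe_singleton, Set.mem_singleton_iff] at hxs
        subst hxs
        exact absurd (by intro y hy; simp at hy; subst hy; exact hxq) hsub
      | succ k =>
        obtain ⟨-, hlc⟩ := hl
        obtain ⟨-, -, hvc⟩ := hv
        simp only [pts] at hst ⊢
        simp only [hst, ↓reduceIte]
        calc pathStab (flatten (PTree.node s (k+1) c)) q
            ≤ ((List.ofFn fun i : Fin (k+1) => flatten (c i)).map (pathStab · q)).sum
                + (k+1) := by
              rw [flatten_succ]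
              have h := pathStab_join (List.ofFn fun i : Fin (k+1) => flatten (c i)) q
              rwa [List.length_ofFn] at h
          _ ≤ (∑ i : Fin (k+1), (c i).zetaAux q) + (k+1) := by
              gcongr ?_ + _
              rw [List.map_ofFn, List.sum_ofFn]
              apply Finset.sum_le_sum
              intro i _
              refine le_trans (ih i (hvc i) (hlc i)) ?_
              split
              · exact le_rfl
              · exact Nat.zero_le _
          _ ≤ PTree.zetaAux q (PTree.node s (k+1) c) := by
              rw [PTree.zetaAux, if_pos hst]
              omega
    · -- not stabbed
      simp only [pts] at hst ⊢
      simp only [hst, ↓reduceIte]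
      simp only [PTree.Stabs, not_and_or, not_not, Set.not_nonempty_iff_eq_empty] at hst
      have hmem : ∀ x ∈ flatten (PTree.node s k c), x ∈ (s : Set V) := by
        intro x hx
        simpa [pts] using (mem_flatten _ hv x).mp hx
      rcases hst with hst | hst
      · refine Nat.le_of_eq (pathStab_eq_zero_of_not_mem _ _ ?_)
        intro x hx hxq
        have : x ∈ q ∩ ↑s := ⟨hxq, hmem x hx⟩
        rw [hst] at this
        exact this
      · exact Nat.le_of_eq (pathStab_eq_zero_of_mem _ _ fun x hx => hst (hmem x hx))

end PTreeAux

/-- for every partition tree `T` on `P` whose leaves are single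
points, there is a Hamiltonian path `Π` with `σ(Π, q) ≤ ζ(T, q)` for all
ranges `q ∈ R`. -/
theorem stmt5 {V : Type*} [Fintype V] [DecidableEq V] (R : Set (Set V))
    (T : PTree V) (hv : T.valid) (hroot : T.pts = Finset.univ)
    (hleaves : T.leavesSingle) :
    ∃ p : List V, p.Nodup ∧ (∀ v : V, v ∈ p) ∧
      ∀ q ∈ R, pathStab p q ≤ T.zeta q := by
  refine ⟨PTreeAux.flatten T, PTreeAux.nodup_flatten T hv, ?_, ?_⟩
  · intro v
    rw [PTreeAux.mem_flatten T hv, hroot]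
    exact Finset.mem_univ v
  · intro q _
    refine le_trans (PTreeAux.pathStab_flatten_le T hv hleaves q) ?_
    unfold PTree.zeta
    split <;> omega
end

section
/- If the query distribution D_q is (α, r)-sparse in ℝ^d, and every ring separator used in a ring tree of height h = O(c log n) on an n-point set P has query mass at most O(α^{Θ(1/d)}) + O(1/n) (probability that a random query lands in the separator ring), and the tree is balanced with both children of each node containing at least a 1/(c+1) fraction of the node's points (c the doubling constant of ℝ^d), then the expected query time of the fixed-radius-ball search on the ring tree is O(n·α^{Θ(1/d)}·c·log n), and the tree requires O(d·n) space. -/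
open scoped Classical
open MeasureTheory

/-- A ring tree: internal nodes carry a ring separator (center, inner radius),
leaves carry the stored points. -/
inductive RTree (E : Type u) : Type u
  | leaf : Finset E → RTree E
  | node : E → ℝ → RTree E → RTree E → RTree E

namespace RTree

variable {E : Type u}

/-- The set of points stored in (the leaves of) a ring tree. -/
def pts [DecidableEq E] : RTree E → Finset E
  | .leaf s => s
  | .node _ _ l r => l.pts ∪ r.pts

/-- Total number of nodes of the tree. -/
def numNodes : RTree E → ℕ
  | .leaf _ => 1
  | .node _ _ l r => 1 + l.numNodes + r.numNodes

/-- The query cost of the fixed-radius-ball search with search radius `rr`: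
one unit per visited internal node, the query descends to the inner child when
`dist q o < r_s`, to the outer child when `dist q o > r_s + 2rr`, and to both
children otherwise; at a leaf all stored points are scanned. -/
noncomputable def cost [DecidableEq E] [PseudoMetricSpace E] (rr : ℝ) (q : E) :
    RTree E → ℕ
  | .leaf s => s.card
  | .node o rs l r =>
      1 + (if dist q o < rs then l.cost rr q
           else if rs + 2 * rr < dist q o then r.cost rr q
           else l.cost rr q + r.cost rr q)

/-- Structural validity of a ring tree: leaves are nonempty and hold at most
`L` points, the two children of every node are disjoint, their points lie on
the correct side of the middle sphere of the ring separator, and each child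
holds at least a `1/(c+1)` fraction of the node's points. -/
def valid [DecidableEq E] [PseudoMetricSpace E] (c L : ℕ) (rr : ℝ) :
    RTree E → Prop
  | .leaf s => s.Nonempty ∧ s.card ≤ L
  | .node o rs l r =>
      Disjoint l.pts r.pts ∧
      (∀ x ∈ l.pts, dist x o < rs + rr) ∧
      (∀ x ∈ r.pts, rs + rr ≤ dist x o) ∧
      (((l.pts ∪ r.pts).card : ℝ) / (c + 1) ≤ (l.pts.card : ℝ)) ∧
      (((l.pts ∪ r.pts).card : ℝ) / (c + 1) ≤ (r.pts.card : ℝ)) ∧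
      l.valid c L rr ∧ r.valid c L rr

/-- Every ring separator in the tree has query mass at most `β` under the
query distribution `D`. -/
def sepBound [PseudoMetricSpace E] [MeasurableSpace E] (D : Measure E)
    (rr β : ℝ) : RTree E → Prop
  | .leaf _ => True
  | .node o rs l r =>
      (D {q | rs ≤ dist q o ∧ dist q o ≤ rs + 2 * rr}).toReal ≤ β ∧
      l.sepBound D rr β ∧ r.sepBound D rr β

end RTree


namespace RTree

variable {E : Type u}

/-- Height of a ring tree. -/
def height : RTree E → ℕ
  | .leaf _ => 0
  | .node _ _ l r => 1 + max l.height r.height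

/-- Number of "bad" nodes for a query: nodes whose separator ring contains it. -/
noncomputable def bad [PseudoMetricSpace E] (rr : ℝ) (q : E) : RTree E → ℕ
  | .leaf _ => 0
  | .node o rs l r =>
      (if rs ≤ dist q o ∧ dist q o ≤ rs + 2 * rr then 1 else 0)
        + bad rr q l + bad rr q r

variable [DecidableEq E] [PseudoMetricSpace E]

lemma pts_nonempty {c L : ℕ} {rr : ℝ} :
    ∀ T : RTree E, T.valid c L rr → T.pts.Nonempty
  | .leaf s, h => h.1
  | .node o rs l r, h => by
      have := pts_nonempty l h.2.2.2.2.2.1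
      simpa [pts] using Finset.Nonempty.mono Finset.subset_union_left this

lemma one_le_card {c L : ℕ} {rr : ℝ} (T : RTree E) (h : T.valid c L rr) :
    1 ≤ T.pts.card :=
  Finset.card_pos.2 (pts_nonempty T h)

lemma numNodes_bound {c L : ℕ} {rr : ℝ} :
    ∀ T : RTree E, T.valid c L rr → T.numNodes + 1 ≤ 2 * T.pts.card
  | .leaf s, h => by
      have h1 : 0 < s.card := Finset.card_pos.2 h.1
      simp only [numNodes, pts]; omega
  | .node o rs l r, h => by
      have hl := numNodes_bound l h.2.2.2.2.2.1
      have hr := numNodes_bound r h.2.2.2.2.2.2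
      have hcard : (l.pts ∪ r.pts).card = l.pts.card + r.pts.card :=
        Finset.card_union_of_disjoint h.1
      simp only [numNodes, pts, hcard]; omega

lemma height_growth {c L : ℕ} {rr : ℝ} (hc : 1 ≤ c) :
    ∀ T : RTree E, T.valid c L rr →
      (1 + 1 / (c : ℝ)) ^ T.height ≤ (T.pts.card : ℝ)
  | .leaf s, h => by
      have := Finset.card_pos.2 h.1
      simp only [height, pow_zero]
      exact_mod_cast this
  | .node o rs l r, h => by
      have hc0 : (0:ℝ) < (c:ℝ) := by positivity
      have hIHl := height_growth hc l h.2.2.2.2.2.1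
      have hIHr := height_growth hc r h.2.2.2.2.2.2
      have hcard : ((l.pts ∪ r.pts).card : ℝ) = (l.pts.card : ℝ) + (r.pts.card : ℝ) := by
        rw [Finset.card_union_of_disjoint h.1]; push_cast; ring
      have hbl : ((l.pts ∪ r.pts).card : ℝ) / (c + 1) ≤ (l.pts.card : ℝ) := h.2.2.2.1
      have hbr : ((l.pts ∪ r.pts).card : ℝ) / (c + 1) ≤ (r.pts.card : ℝ) := h.2.2.2.2.1
      have hc1 : (0:ℝ) < (c:ℝ) + 1 := by positivity
      -- l.card ≤ c * r.card and r.card ≤ c * l.card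
      have h1 : (l.pts.card : ℝ) ≤ c * (r.pts.card : ℝ) := by
        rw [div_le_iff₀ hc1] at hbr; rw [hcard] at hbr; nlinarith
      have h2 : (r.pts.card : ℝ) ≤ c * (l.pts.card : ℝ) := by
        rw [div_le_iff₀ hc1] at hbl; rw [hcard] at hbl; nlinarith
      have hb : (0:ℝ) ≤ 1 + 1 / (c:ℝ) := by positivity
      simp only [height, pts, hcard]
      rw [pow_add, pow_one]
      rcases le_total l.height r.height with hle | hle
      · rw [max_eq_right hle]
        calc (1 + 1/(c:ℝ)) * (1 + 1/(c:ℝ)) ^ r.height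
            ≤ (1 + 1/(c:ℝ)) * (r.pts.card : ℝ) := by
              exact mul_le_mul_of_nonneg_left hIHr hb
          _ ≤ (l.pts.card : ℝ) + (r.pts.card : ℝ) := by
              have : (r.pts.card:ℝ) / c ≤ (l.pts.card:ℝ) := by
                rw [div_le_iff₀ hc0]; nlinarith
              have hx : (1 + 1/(c:ℝ)) * (r.pts.card : ℝ)
                  = (r.pts.card : ℝ) + (r.pts.card:ℝ)/c := by ring
              rw [hx]; linarith
      · rw [max_eq_left hle]
        calc (1 + 1/(c:ℝ)) * (1 + 1/(c:ℝ)) ^ l.height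
            ≤ (1 + 1/(c:ℝ)) * (l.pts.card : ℝ) := by
              exact mul_le_mul_of_nonneg_left hIHl hb
          _ ≤ (l.pts.card : ℝ) + (r.pts.card : ℝ) := by
              have : (l.pts.card:ℝ) / c ≤ (r.pts.card:ℝ) := by
                rw [div_le_iff₀ hc0]; nlinarith
              have hx : (1 + 1/(c:ℝ)) * (l.pts.card : ℝ)
                  = (l.pts.card : ℝ) + (l.pts.card:ℝ)/c := by ring
              rw [hx]; linarith

lemma cost_le {c L : ℕ} {rr : ℝ} (hL : 1 ≤ L) (q : E) :
    ∀ T : RTree E, T.valid c L rr →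
      T.cost rr q ≤ (T.bad rr q + 1) * (T.height + 1) * L
  | .leaf s, h => by
      simp only [cost, bad, height]
      simpa using h.2
  | .node o rs l r, h => by
      have hl := cost_le hL q l h.2.2.2.2.2.1
      have hr := cost_le hL q r h.2.2.2.2.2.2
      simp only [cost, bad, height]
      set i := (if rs ≤ dist q o ∧ dist q o ≤ rs + 2 * rr then 1 else 0) with hi
      by_cases h1 : dist q o < rs
      · rw [if_pos h1]
        have hh : l.height + 1 ≤ 1 + max l.height r.height := by omega
        have hb : l.bad rr q + 1 ≤ i + l.bad rr q + r.bad rr q + 1 := by omega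
        calc 1 + l.cost rr q ≤ 1 + (l.bad rr q + 1) * (l.height + 1) * L := by omega
          _ ≤ (i + l.bad rr q + r.bad rr q + 1) * ((1 + max l.height r.height) + 1) * L := by
              have h2 : (l.bad rr q + 1) * (l.height + 1) * L
                  ≤ (i + l.bad rr q + r.bad rr q + 1) * (1 + max l.height r.height) * L :=
                Nat.mul_le_mul_right _ (Nat.mul_le_mul hb (by omega))
              have h3 : 1 ≤ (i + l.bad rr q + r.bad rr q + 1) * L :=
                Nat.one_le_iff_ne_zero.2 (by positivity)
              nlinarith
      · rw [if_neg h1]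
        by_cases h2 : rs + 2 * rr < dist q o
        · rw [if_pos h2]
          have hb : r.bad rr q + 1 ≤ i + l.bad rr q + r.bad rr q + 1 := by omega
          calc 1 + r.cost rr q ≤ 1 + (r.bad rr q + 1) * (r.height + 1) * L := by omega
            _ ≤ (i + l.bad rr q + r.bad rr q + 1) * ((1 + max l.height r.height) + 1) * L := by
                have h2 : (r.bad rr q + 1) * (r.height + 1) * L
                    ≤ (i + l.bad rr q + r.bad rr q + 1) * (1 + max l.height r.height) * L :=
                  Nat.mul_le_mul_right _ (Nat.mul_le_mul hb (by omega))
                have h3 : 1 ≤ (i + l.bad rr q + r.bad rr q + 1) * L :=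
                  Nat.one_le_iff_ne_zero.2 (by positivity)
                nlinarith
        · rw [if_neg h2]
          have hi1 : i = 1 := by
            rw [hi, if_pos ⟨le_of_not_gt h1, le_of_not_gt h2⟩]
          have hml : l.height + 1 ≤ 1 + max l.height r.height := by omega
          have hmr : r.height + 1 ≤ 1 + max l.height r.height := by omega
          have hbl : (l.bad rr q + 1) * (l.height + 1) * L
              ≤ (l.bad rr q + 1) * (1 + max l.height r.height) * L :=
            Nat.mul_le_mul_right _ (Nat.mul_le_mul_left _ hml)
          have hbr : (r.bad rr q + 1) * (r.height + 1) * L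
              ≤ (r.bad rr q + 1) * (1 + max l.height r.height) * L :=
            Nat.mul_le_mul_right _ (Nat.mul_le_mul_left _ hmr)
          have h3 : 1 ≤ (i + l.bad rr q + r.bad rr q + 1) * L :=
            Nat.one_le_iff_ne_zero.2 (by positivity)
          have key : (l.bad rr q + 1) * (1 + max l.height r.height) * L
                + (r.bad rr q + 1) * (1 + max l.height r.height) * L
                + (i + l.bad rr q + r.bad rr q + 1) * L
              ≤ (i + l.bad rr q + r.bad rr q + 1) * ((1 + max l.height r.height) + 1) * L := by
            rw [hi1]; ring_nf; nlinarith [Nat.zero_le (max l.height r.height)]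
          omega

lemma bad_le_numNodes (rr : ℝ) (q : E) :
    ∀ T : RTree E, T.bad rr q ≤ T.numNodes
  | .leaf _ => by simp [bad, numNodes]
  | .node o rs l r => by
      have hl := bad_le_numNodes rr q l
      have hr := bad_le_numNodes rr q r
      simp only [bad, numNodes]
      split <;> omega

variable [MeasurableSpace E] [OpensMeasurableSpace E]

lemma ringSet_measurable (o : E) (rs rr : ℝ) :
    MeasurableSet {q : E | rs ≤ dist q o ∧ dist q o ≤ rs + 2 * rr} := by
  have hd : Measurable fun q : E => dist q o :=
    (continuous_id.dist continuous_const).measurable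
  exact (measurableSet_le measurable_const hd).inter
    (measurableSet_le hd measurable_const)

lemma bad_measurable (rr : ℝ) :
    ∀ T : RTree E, Measurable fun q : E => (T.bad rr q : ℝ)
  | .leaf _ => by simp only [bad]; exact measurable_const
  | .node o rs l r => by
      have hl := bad_measurable rr l
      have hr := bad_measurable rr r
      have : (fun q : E => ((RTree.node o rs l r).bad rr q : ℝ))
          = fun q : E => (if rs ≤ dist q o ∧ dist q o ≤ rs + 2 * rr then (1:ℝ) else 0)
              + (l.bad rr q : ℝ) + (r.bad rr q : ℝ) := by
        funext q; simp only [bad]; push_cast; ring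
      rw [this]
      exact ((Measurable.ite (ringSet_measurable o rs rr) measurable_const
        measurable_const).add hl).add hr

lemma bad_integrable (rr : ℝ) (D : Measure E) [IsProbabilityMeasure D]
    (T : RTree E) : Integrable (fun q : E => (T.bad rr q : ℝ)) D := by
  refine (integrable_const (T.numNodes : ℝ)).mono'
    (bad_measurable rr T).aestronglyMeasurable (ae_of_all _ fun q => ?_)
  rw [Real.norm_eq_abs, abs_of_nonneg (by positivity)]
  exact_mod_cast bad_le_numNodes rr q T

lemma bad_integral_le {rr β : ℝ} (hβ : 0 ≤ β) (D : Measure E)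
    [IsProbabilityMeasure D] :
    ∀ T : RTree E, T.sepBound D rr β →
      (∫ q, (T.bad rr q : ℝ) ∂D) ≤ (T.numNodes : ℝ) * β
  | .leaf s, _ => by simp [bad, numNodes, hβ]
  | .node o rs l r, h => by
      have hl := bad_integral_le hβ D l h.2.1
      have hr := bad_integral_le hβ D r h.2.2
      have hmeas := ringSet_measurable (E := E) o rs rr
      have hind : Integrable
          (fun q : E => if rs ≤ dist q o ∧ dist q o ≤ rs + 2 * rr then (1:ℝ) else 0) D := by
        refine (integrable_const (1:ℝ)).mono'
          ((Measurable.ite hmeas measurable_const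
            measurable_const).aestronglyMeasurable) (ae_of_all _ fun q => ?_)
        split <;> simp
      have heq : (fun q : E => ((RTree.node o rs l r).bad rr q : ℝ))
          = fun q : E => (if rs ≤ dist q o ∧ dist q o ≤ rs + 2 * rr then (1:ℝ) else 0)
              + ((l.bad rr q : ℝ) + (r.bad rr q : ℝ)) := by
        funext q; simp only [bad]; push_cast; ring
      have hint : (∫ q, ((RTree.node o rs l r).bad rr q : ℝ) ∂D)
          = (∫ q, (if rs ≤ dist q o ∧ dist q o ≤ rs + 2 * rr then (1:ℝ) else 0) ∂D)
            + ((∫ q, (l.bad rr q : ℝ) ∂D) + (∫ q, (r.bad rr q : ℝ) ∂D)) := by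
        have hadd2 : Integrable (fun q : E => ((l.bad rr q : ℝ) + (r.bad rr q : ℝ))) D :=
          (bad_integrable rr D l).add (bad_integrable rr D r)
        rw [heq]
        exact (integral_add hind hadd2).trans (by
          rw [integral_add (bad_integrable rr D l) (bad_integrable rr D r)])
      have hindval : (∫ q, (if rs ≤ dist q o ∧ dist q o ≤ rs + 2 * rr then (1:ℝ) else 0) ∂D)
          ≤ β := by
        have : (fun q : E => if rs ≤ dist q o ∧ dist q o ≤ rs + 2 * rr then (1:ℝ) else 0)
            = Set.indicator {q : E | rs ≤ dist q o ∧ dist q o ≤ rs + 2 * rr}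
              (fun _ => (1:ℝ)) := by
          funext q; simp [Set.indicator_apply]
        rw [this, integral_indicator_const (1:ℝ) hmeas]
        simpa [Measure.real] using h.1
      have hN : ((RTree.node o rs l r).numNodes : ℝ)
          = 1 + (l.numNodes : ℝ) + (r.numNodes : ℝ) := by
        simp only [numNodes]; push_cast; ring
      rw [hint, hN]; nlinarith

end RTree

/-- for an `(α, r)`-sparse query distribution, a balanced ring
tree on `n` points whose ring separators all have query mass at most
`α^{Θ(1/d)} + O(1/n)` answers fixed-radius-ball queries in expected time
`O(n·α^{Θ(1/d)}·c·log n)` and has `O(n)` nodes (hence `O(d·n)` space, each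
node storing `O(d)` coordinates). -/
theorem stmt19 :
    ∃ K : ℝ, 0 < K ∧
      ∀ (d c L n : ℕ), 2 ≤ c → 1 ≤ L → 2 ≤ n →
      ∀ (D : Measure (EuclideanSpace ℝ (Fin d))) (_ : IsProbabilityMeasure D)
        (α rr γ κ : ℝ), 0 < α → α ≤ 1 → 0 < rr → 0 < γ → 0 ≤ κ →
        (∀ x : EuclideanSpace ℝ (Fin d),
          (D (Metric.closedBall x rr)).toReal ≤ α) →
      ∀ T : RTree (EuclideanSpace ℝ (Fin d)),
        T.valid c L rr → T.pts.card = n →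
        T.sepBound D rr (α ^ (γ / (d : ℝ)) + κ / n) →
        ((∫ q, (T.cost rr q : ℝ) ∂D)
            ≤ K * (1 + κ) * ((n : ℝ) * α ^ (γ / (d : ℝ)) + 1)
              * ((c : ℝ) * Real.log n) * L) ∧
        ((T.numNodes : ℝ) ≤ K * n) := by
  refine ⟨9, by norm_num, ?_⟩
  intro d c L n hc hL hn D hD α rr γ κ hα hα1 hrr hγ hκ hsparse T hval hcard hsep
  have hc1 : 1 ≤ c := le_trans (by norm_num) hc
  set A : ℝ := α ^ (γ / (d : ℝ)) with hA
  have hA0 : 0 < A := Real.rpow_pos_of_pos hα _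
  have hn2 : (2:ℝ) ≤ (n:ℝ) := by exact_mod_cast hn
  have hn0 : (0:ℝ) < (n:ℝ) := by linarith
  set β : ℝ := A + κ / n with hβ
  have hβ0 : 0 ≤ β := by positivity
  have hL1 : (1:ℝ) ≤ (L:ℝ) := by exact_mod_cast hL
  have hcR : (2:ℝ) ≤ (c:ℝ) := by exact_mod_cast hc
  -- numNodes bound
  have hNnat := RTree.numNodes_bound T hval
  rw [hcard] at hNnat
  have hN : (T.numNodes : ℝ) ≤ 2 * (n:ℝ) := by
    have : (T.numNodes : ℝ) + 1 ≤ 2 * (n:ℝ) := by exact_mod_cast hNnat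
    linarith
  -- log lower bound:  1 ≤ c * log n
  have hlogn : Real.log 2 ≤ Real.log n := Real.log_le_log (by norm_num) hn2
  have hlog2 : (0.6931471803 : ℝ) < Real.log 2 := Real.log_two_gt_d9
  have hclog : (1:ℝ) ≤ (c:ℝ) * Real.log n := by nlinarith
  have hlogn0 : 0 ≤ Real.log n := by nlinarith
  -- height bound
  have hHR : (T.height : ℝ) ≤ 2 * (c:ℝ) * Real.log n := by
    have hgrow := RTree.height_growth hc1 T hval
    rw [hcard] at hgrow
    have hcpos : (0:ℝ) < (c:ℝ) := by linarith
    have hb1 : (1:ℝ) < 1 + 1 / (c:ℝ) := by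
      have : (0:ℝ) < 1 / (c:ℝ) := by positivity
      linarith
    have hpow0 : (0:ℝ) < (1 + 1 / (c:ℝ)) ^ T.height := by positivity
    have hl1 : (T.height : ℝ) * Real.log (1 + 1 / (c:ℝ)) ≤ Real.log n := by
      have := Real.log_le_log hpow0 hgrow
      rwa [Real.log_pow] at this
    have hkey : (1:ℝ) / ((c:ℝ) + 1) ≤ Real.log (1 + 1 / (c:ℝ)) := by
      have hpos : (0:ℝ) < (c:ℝ) / ((c:ℝ) + 1) := by positivity
      have h1 := Real.log_le_sub_one_of_pos hpos
      have h2 : Real.log ((c:ℝ) / ((c:ℝ) + 1)) = - Real.log (1 + 1 / (c:ℝ)) := by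
        rw [← Real.log_inv]
        congr 1
        field_simp
      rw [h2] at h1
      have h3 : (c:ℝ) / ((c:ℝ) + 1) - 1 = - (1 / ((c:ℝ) + 1)) := by
        field_simp; ring
      rw [h3] at h1
      linarith
    have hH0 : (0:ℝ) ≤ (T.height : ℝ) := by positivity
    have h4 : (T.height : ℝ) * (1 / ((c:ℝ) + 1)) ≤ Real.log n := by
      calc (T.height : ℝ) * (1 / ((c:ℝ) + 1))
          ≤ (T.height : ℝ) * Real.log (1 + 1 / (c:ℝ)) :=
            mul_le_mul_of_nonneg_left hkey hH0
        _ ≤ Real.log n := hl1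
    have h5 : (c:ℝ) + 1 ≤ 2 * (c:ℝ) := by linarith
    rw [mul_one_div, div_le_iff₀ (by positivity : (0:ℝ) < (c:ℝ) + 1)] at h4
    nlinarith
  constructor
  · -- expected cost bound
    set g : EuclideanSpace ℝ (Fin d) → ℝ :=
      fun q => ((T.bad rr q : ℝ) + 1) * (((T.height : ℝ) + 1) * (L:ℝ)) with hg
    have hgi : Integrable g D :=
      ((RTree.bad_integrable rr D T).add (integrable_const 1)).mul_const _
    have hmono : (∫ q, (T.cost rr q : ℝ) ∂D) ≤ ∫ q, g q ∂D := by
      refine integral_mono_of_nonneg (ae_of_all _ fun q => by positivity) hgi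
        (ae_of_all _ fun q => ?_)
      have hq := RTree.cost_le hL q T hval
      have : (T.cost rr q : ℝ) ≤ ((T.bad rr q : ℝ) + 1) * ((T.height : ℝ) + 1) * (L:ℝ) := by
        exact_mod_cast hq
      simpa [hg, mul_assoc] using this
    have hI0 : 0 ≤ ∫ q, (T.bad rr q : ℝ) ∂D :=
      integral_nonneg fun q => by positivity
    have hIβ : (∫ q, (T.bad rr q : ℝ) ∂D) ≤ (T.numNodes : ℝ) * β :=
      RTree.bad_integral_le hβ0 D T hsep
    have hgval : (∫ q, g q ∂D)
        = ((∫ q, (T.bad rr q : ℝ) ∂D) + 1) * (((T.height : ℝ) + 1) * (L:ℝ)) := by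
      rw [hg]
      rw [integral_mul_const]
      congr 1
      rw [integral_add (RTree.bad_integrable rr D T) (integrable_const 1)]
      simp
    set I : ℝ := ∫ q, (T.bad rr q : ℝ) ∂D
    have hNβ : (T.numNodes : ℝ) * β ≤ 2 * (n:ℝ) * A + 2 * κ := by
      have h1 : (T.numNodes : ℝ) * β ≤ 2 * (n:ℝ) * β :=
        mul_le_mul_of_nonneg_right hN hβ0
      have h2 : 2 * (n:ℝ) * β = 2 * (n:ℝ) * A + 2 * κ := by
        rw [hβ]; field_simp
      linarith
    have step1 : I + 1 ≤ 3 * (1 + κ) * ((n:ℝ) * A + 1) := by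
      have hnA : 0 ≤ (n:ℝ) * A := by positivity
      have hκnA : 0 ≤ κ * ((n:ℝ) * A) := by positivity
      have hexp : 3 * (1 + κ) * ((n:ℝ) * A + 1)
          = 3 * ((n:ℝ) * A) + 3 * (κ * ((n:ℝ) * A)) + 3 * κ + 3 := by ring
      linarith
    have step2 : (T.height : ℝ) + 1 ≤ 3 * ((c:ℝ) * Real.log n) := by linarith
    calc (∫ q, (T.cost rr q : ℝ) ∂D) ≤ ∫ q, g q ∂D := hmono
      _ = (I + 1) * (((T.height : ℝ) + 1) * (L:ℝ)) := hgval
      _ ≤ (3 * (1 + κ) * ((n:ℝ) * A + 1)) * ((3 * ((c:ℝ) * Real.log n)) * (L:ℝ)) := by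
          refine mul_le_mul step1 (mul_le_mul_of_nonneg_right step2 (by positivity))
            (by positivity) (by positivity)
      _ = 9 * (1 + κ) * ((n : ℝ) * A + 1) * ((c : ℝ) * Real.log n) * (L:ℝ) := by
          ring
  · -- space bound
    linarith
end
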